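/- Let S be a commutative ring with identity, R a unitary subring of S, and I an ideal of S such that S/(R :_S S) is a Noetherian ring and R/(R :_S S) is a principal ideal ring. Then I is an R-conductor ideal of S if and only if (R :_S S) ⊆ I and for every prime ideal M of S containing I, either R + M ⊊ S or (I :_R M) ⊆ I. -/

import Mathlib

set_option synthInstance.maxHeartbeats 1000000
set_option maxHeartbeats 1000000

/-- The conductor `(A :_S S) = {x ∈ S | x * S ⊆ A}` of an additive subgroup `A` of `S`,
as an ideal of `S`. -/
def condIdeal {S : Type*} [CommRing S] (A : AddSubgroup S) : Ideal S where
  carrier := {x : S | ∀ s : S, x * s ∈ A}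
  add_mem' := by
    intro x y hx hy s
    simpa [add_mul] using A.add_mem (hx s) (hy s)
  zero_mem' := by
    intro s
    simpa using A.zero_mem
  smul_mem' := by
    intro c x hx s
    have := hx (c * s)
    simpa [smul_eq_mul, mul_assoc, mul_comm, mul_left_comm] using this

/-- `R + I = {r + a | r ∈ R, a ∈ I}` as an additive subgroup of `S`. -/
def addSub {S : Type*} [CommRing S] (R : Subring S) (I : Ideal S) : AddSubgroup S where
  carrier := {x : S | ∃ r ∈ R, ∃ a ∈ I, x = r + a}
  zero_mem' := ⟨0, R.zero_mem, 0, I.zero_mem, by simp⟩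
  add_mem' := by
    rintro x y ⟨r, hr, a, ha, rfl⟩ ⟨r', hr', a', ha', rfl⟩
    exact ⟨r + r', R.add_mem hr hr', a + a', I.add_mem ha ha', by ring⟩
  neg_mem' := by
    rintro x ⟨r, hr, a, ha, rfl⟩
    exact ⟨-r, R.neg_mem hr, -a, I.neg_mem ha, by ring⟩

/-- `I` is an `R`-conductor ideal of `S` if `I = (V :_S S)` for some intermediate ring
`R ⊆ V ⊆ S`. -/
def IsConductorIdeal {S : Type*} [CommRing S] (R : Subring S) (I : Ideal S) : Prop :=
  ∃ V : Subring S, R ≤ V ∧ I = condIdeal V.toAddSubgroup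

/-- `R + I` as a subring of `S` (for `I` an ideal of `S`). -/
def ringAdj {S : Type*} [CommRing S] (R : Subring S) (I : Ideal S) : Subring S where
  carrier := {x : S | ∃ r ∈ R, ∃ a ∈ I, x = r + a}
  zero_mem' := ⟨0, R.zero_mem, 0, I.zero_mem, by simp⟩
  one_mem' := ⟨1, R.one_mem, 0, I.zero_mem, by simp⟩
  add_mem' := by
    rintro x y ⟨r, hr, a, ha, rfl⟩ ⟨r', hr', a', ha', rfl⟩
    exact ⟨r + r', R.add_mem hr hr', a + a', I.add_mem ha ha', by ring⟩
  neg_mem' := by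
    rintro x ⟨r, hr, a, ha, rfl⟩
    exact ⟨-r, R.neg_mem hr, -a, I.neg_mem ha, by ring⟩
  mul_mem' := by
    rintro x y ⟨r, hr, a, ha, rfl⟩ ⟨r', hr', a', ha', rfl⟩
    refine ⟨r * r', R.mul_mem hr hr', r * a' + a * r' + a * a', ?_, by ring⟩
    exact I.add_mem (I.add_mem (I.mul_mem_left _ ha') (I.mul_mem_right _ ha))
      (I.mul_mem_right _ ha)

/-- The colon ideal `(I : x) = {t | x * t ∈ I}`. -/
def colonI {S : Type*} [CommRing S] (I : Ideal S) (x : S) : Ideal S where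
  carrier := {t : S | x * t ∈ I}
  add_mem' := by
    intro a b ha hb
    simpa [mul_add] using I.add_mem ha hb
  zero_mem' := by simp
  smul_mem' := by
    intro c t ht
    simp only [smul_eq_mul, Set.mem_setOf_eq] at *
    rw [mul_left_comm]
    exact I.mul_mem_left c ht

lemma mem_colonI {S : Type*} [CommRing S] {I : Ideal S} {x t : S} :
    t ∈ colonI I x ↔ x * t ∈ I := Iff.rfl

lemma le_of_map_le {S : Type*} [CommRing S] {C J J' : Ideal S}
    (hJ' : C ≤ J') (h : J.map (Ideal.Quotient.mk C) ≤ J'.map (Ideal.Quotient.mk C)) :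
    J ≤ J' := by
  have h1 : J ≤ Ideal.comap (Ideal.Quotient.mk C) (J.map (Ideal.Quotient.mk C)) :=
    Ideal.le_comap_map
  have h2 : Ideal.comap (Ideal.Quotient.mk C) (J'.map (Ideal.Quotient.mk C)) = J' := by
    rw [Ideal.comap_map_of_surjective _ Ideal.Quotient.mk_surjective]
    have : Ideal.comap (Ideal.Quotient.mk C) ⊥ = C := by
      rw [← RingHom.ker_eq_comap_bot, Ideal.mk_ker]
    rw [this, sup_eq_left.mpr hJ']
  exact le_trans h1 (le_trans (Ideal.comap_mono h) h2.le)

/-- The image of the `R`-linear map `ψ : S → R/(R ∩ I)`, `ψ(s) = r` where `x*s = r + a`,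
`r ∈ R`, `a ∈ I`, as an ideal of `R/(R ∩ I)`. -/
def psiIdeal {S : Type*} [CommRing S] (R : Subring S) (I : Ideal S) (x : S) :
    Ideal (↥R ⧸ I.comap R.subtype) where
  carrier := {z | ∃ r : ↥R, ∃ s : S, x * s - (r : S) ∈ I ∧
    Ideal.Quotient.mk (I.comap R.subtype) r = z}
  add_mem' := by
    rintro z z' ⟨r, s, h, rfl⟩ ⟨r', s', h', rfl⟩
    refine ⟨r + r', s + s', ?_, by rw [map_add]⟩
    have := I.add_mem h h'
    convert this using 1
    push_cast
    ring
  zero_mem' := ⟨0, 0, by simp, by simp⟩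
  smul_mem' := by
    intro c z hz
    obtain ⟨t, rfl⟩ := Ideal.Quotient.mk_surjective c
    obtain ⟨r, s, h, rfl⟩ := hz
    refine ⟨t * r, (t : S) * s, ?_, by rw [smul_eq_mul, ← map_mul]⟩
    have := I.mul_mem_left (t : S) h
    convert this using 1
    push_cast
    ring

lemma mem_psiIdeal {S : Type*} [CommRing S] {R : Subring S} {I : Ideal S} {x : S}
    {z : ↥R ⧸ I.comap R.subtype} :
    z ∈ psiIdeal R I x ↔ ∃ r : ↥R, ∃ s : S, x * s - (r : S) ∈ I ∧
      Ideal.Quotient.mk (I.comap R.subtype) r = z := Iff.rfl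

/-- If `S/(R :_S S)` is Noetherian and `R/(R :_S S)` is a principal ideal ring, then `I` is
an `R`-conductor ideal of `S` if and only if `(R :_S S) ⊆ I` and for every prime ideal
`M` of `S` containing `I` we have `R + M ⊊ S` or `(I :_R M) ⊆ I`. -/
theorem stmt_12 {S : Type*} [CommRing S] (R : Subring S) (I : Ideal S)
    (hN : IsNoetherianRing (S ⧸ condIdeal R.toAddSubgroup))
    (hP : IsPrincipalIdealRing (↥R ⧸ (condIdeal R.toAddSubgroup).comap R.subtype)) :
    IsConductorIdeal R I ↔
      condIdeal R.toAddSubgroup ≤ I ∧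
      ∀ M : Ideal S, M.IsPrime → I ≤ M →
        addSub R M ≠ ⊤ ∨ {x : S | x ∈ R ∧ ∀ m ∈ M, x * m ∈ I} ⊆ (I : Set S) := by
  set C := condIdeal R.toAddSubgroup with hCdef
  constructor
  · rintro ⟨V, hRV, rfl⟩
    constructor
    · intro x hx s
      exact hRV (hx s)
    · intro M hM hIM
      rw [or_iff_not_imp_left, not_not]
      intro htop x hx
      rcases hx with ⟨hxR, hxM⟩
      intro s
      have hs : s ∈ addSub R M := htop ▸ AddSubgroup.mem_top s
      obtain ⟨r, hr, m, hm, rfl⟩ := hs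
      have h1 : x * r ∈ V := V.mul_mem (hRV hxR) (hRV hr)
      have h2 : x * m ∈ V := by
        have := hxM m hm
        simpa using this 1
      simpa [mul_add] using V.add_mem h1 h2
  · rintro ⟨hC, hcond⟩
    refine ⟨ringAdj R I, fun r hr => ⟨r, hr, 0, I.zero_mem, by simp⟩, ?_⟩
    apply le_antisymm
    · intro x hx s
      exact ⟨0, R.zero_mem, x * s, I.mul_mem_right s hx, by simp⟩
    · -- the hard direction: conductor of R+I is contained in I
      intro x hx
      by_contra hxI
      set V := ringAdj R I with hVdef
      -- colon ideals of bad elements contain C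
      have hCle : ∀ y : S, C ≤ colonI I y := fun y t ht => by
        have : t ∈ I := hC ht
        exact mem_colonI.mpr (I.mul_mem_left y this)
      -- find a maximal colon ideal
      have hmax := set_has_maximal_iff_noetherian.mpr hN
        {J : Ideal (S ⧸ C) | ∃ y : S, y ∈ condIdeal V.toAddSubgroup ∧ y ∉ I ∧
          J = (colonI I y).map (Ideal.Quotient.mk C)}
        ⟨(colonI I x).map (Ideal.Quotient.mk C), x, hx, hxI, rfl⟩
      obtain ⟨J, ⟨x₀, hx₀V, hx₀I, rfl⟩, hJmax⟩ := hmax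
      set M := colonI I x₀ with hMdef
      have hmaxM : ∀ y : S, y ∈ condIdeal V.toAddSubgroup → y ∉ I →
          M ≤ colonI I y → colonI I y = M := by
        intro y hyV hyI hle
        have hnlt := hJmax ((colonI I y).map (Ideal.Quotient.mk C)) ⟨y, hyV, hyI, rfl⟩
        have hmaple : M.map (Ideal.Quotient.mk C) ≤ (colonI I y).map (Ideal.Quotient.mk C) :=
          Ideal.map_mono hle
        have heq : (colonI I y).map (Ideal.Quotient.mk C) = M.map (Ideal.Quotient.mk C) := by
          rcases lt_or_eq_of_le hmaple with hlt | heq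
          · exact absurd hlt hnlt
          · exact heq.symm
        exact le_antisymm (le_of_map_le (hCle x₀) heq.le) hle
      -- I ≤ M
      have hIM : I ≤ M := fun t ht => mem_colonI.mpr (I.mul_mem_left x₀ ht)
      -- M is prime
      have hMprime : M.IsPrime := by
        constructor
        · intro htop
          apply hx₀I
          have : (1 : S) ∈ M := htop ▸ Submodule.mem_top
          simpa using mem_colonI.mp this
        · intro a b hab
          by_contra hnot
          push_neg at hnot
          obtain ⟨ha, hb⟩ := hnot
          have hyV : x₀ * b ∈ condIdeal V.toAddSubgroup :=
            (condIdeal V.toAddSubgroup).mul_mem_right b hx₀V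
          have hyI : x₀ * b ∉ I := hb
          have hle : M ≤ colonI I (x₀ * b) := by
            intro m hm
            rw [mem_colonI]
            have h1 : x₀ * m ∈ I := mem_colonI.mp hm
            have h2 : x₀ * b * m = (x₀ * m) * b := by ring
            rw [h2]
            exact I.mul_mem_right b h1
          have heq := hmaxM (x₀ * b) hyV hyI hle
          have hmem : a ∈ colonI I (x₀ * b) := by
            rw [mem_colonI]
            have h1 : x₀ * (a * b) ∈ I := mem_colonI.mp hab
            have h2 : x₀ * b * a = x₀ * (a * b) := by ring
            rw [h2]
            exact h1
          rw [heq] at hmem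
          exact ha hmem
      -- apply the hypothesis
      rcases hcond M hMprime hIM with hMne | hcol
      · -- hard case: R + M ≠ ⊤; use the PIR hypothesis
        set I' : Ideal ↥R := I.comap R.subtype with hI'def
        set C' : Ideal ↥R := C.comap R.subtype with hC'def
        have hC'I' : C' ≤ I' := fun r hr => hC hr
        haveI : IsPrincipalIdealRing (↥R ⧸ I') := by
          refine IsPrincipalIdealRing.of_surjective (Ideal.Quotient.factor hC'I') ?_
          intro z
          obtain ⟨r, rfl⟩ := Ideal.Quotient.mk_surjective z
          exact ⟨Ideal.Quotient.mk C' r, rfl⟩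
        -- every ψ(s) is in psiIdeal
        have hpsi : ∀ s : S, ∃ r : ↥R, x₀ * s - (r : S) ∈ I ∧
            Ideal.Quotient.mk I' r ∈ psiIdeal R I x₀ := by
          intro s
          obtain ⟨r, hr, a, ha, hres⟩ := hx₀V s
          refine ⟨⟨r, hr⟩, by rw [hres]; simpa using ha, ?_⟩
          exact mem_psiIdeal.mpr ⟨⟨r, hr⟩, s, by rw [hres]; simpa using ha, rfl⟩
        -- psiIdeal is principal
        obtain ⟨abar, hgenSpan⟩ := (IsPrincipalIdealRing.principal (psiIdeal R I x₀)).principal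
        obtain ⟨a₀, rfl⟩ := Ideal.Quotient.mk_surjective abar
        -- lift the generator: find g with x₀ * g - a₀ ∈ I
        have hgen : ∃ g : S, x₀ * g - (a₀ : S) ∈ I := by
          have hmem : Ideal.Quotient.mk I' a₀ ∈ psiIdeal R I x₀ := by
            rw [hgenSpan]
            exact Ideal.subset_span rfl
          obtain ⟨r, g, h, hrk⟩ := mem_psiIdeal.mp hmem
          refine ⟨g, ?_⟩
          have hsub : r - a₀ ∈ I' := by
            rwa [Ideal.Quotient.mk_eq_mk_iff_sub_mem] at hrk
          have hsubI : ((r : S) - (a₀ : S)) ∈ I := by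
            have h3 := hsub
            rw [hI'def, Ideal.mem_comap] at h3
            simpa using h3
          have := I.add_mem h hsubI
          convert this using 1
          ring
        obtain ⟨g, hg⟩ := hgen
        -- the key claim: S = R·g + M
        have hclaim : ∀ s : S, ∃ t : ↥R, x₀ * (s - (t : S) * g) ∈ I := by
          intro s
          obtain ⟨r, hrI, hrA⟩ := hpsi s
          rw [hgenSpan] at hrA
          obtain ⟨u, hu⟩ := Submodule.mem_span_singleton.mp hrA
          obtain ⟨t, rfl⟩ := Ideal.Quotient.mk_surjective u
          rw [smul_eq_mul, ← map_mul, Ideal.Quotient.mk_eq_mk_iff_sub_mem] at hu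
          have hsubI : ((t : S) * (a₀ : S) - (r : S)) ∈ I := by
            have h5 := Ideal.mem_comap.mp hu
            simpa using h5
          refine ⟨t, ?_⟩
          have h3 : (t : S) * ((a₀ : S) - x₀ * g) ∈ I := by
            have h4 : (a₀ : S) - x₀ * g ∈ I := by
              have := I.neg_mem hg
              simpa using this
            exact I.mul_mem_left _ h4
          have := I.add_mem (I.sub_mem hrI hsubI) h3
          convert this using 1
          ring
        -- g² = c·g mod M
        obtain ⟨c, hc⟩ := hclaim (g * g)
        have hgc : g * (g - (c : S)) ∈ M := by
          rw [hMdef, mem_colonI]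
          convert hc using 2
          ring
        rcases hMprime.mem_or_mem hgc with hgM | hgcM
        · -- g ∈ M implies 1 ∈ M, contradiction
          obtain ⟨t, ht⟩ := hclaim 1
          have h1M : (1 : S) ∈ M := by
            have htg : (t : S) * g ∈ M := M.mul_mem_left _ hgM
            have hsub : (1 : S) - (t : S) * g ∈ M := by
              rw [hMdef, mem_colonI]; exact ht
            simpa using M.add_mem hsub htg
          exact hMprime.ne_top ((Ideal.eq_top_iff_one M).mpr h1M)
        · -- g - c ∈ M implies R + M = ⊤, contradiction
          apply hMne
          rw [AddSubgroup.eq_top_iff']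
          intro s
          obtain ⟨t, ht⟩ := hclaim s
          refine ⟨(t : S) * (c : S), R.mul_mem t.2 c.2,
            (t : S) * (g - (c : S)) + (s - (t : S) * g), ?_, by ring⟩
          refine M.add_mem (M.mul_mem_left _ hgcM) ?_
          rw [hMdef, mem_colonI]; exact ht
      · -- easy case: (I :_R M) ⊆ I
        obtain ⟨r, hr, a, ha, hres⟩ := hx₀V 1
        rw [mul_one] at hres
        apply hx₀I
        have hrI : r ∈ I := by
          apply hcol
          refine ⟨hr, fun m hm => ?_⟩
          have h1 : x₀ * m ∈ I := mem_colonI.mp hm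
          have h2 : a * m ∈ I := I.mul_mem_right m ha
          have h3 := I.sub_mem h1 h2
          have h4 : r * m = x₀ * m - a * m := by rw [hres]; ring
          rw [h4]
          exact h3
        rw [hres]
        exact I.add_mem hrI ha
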